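/- Let Ω ⊂ ℝ^d be a bounded convex open set. Then Ω is a bounded Lipschitz domain: there exist finitely many points x₁, …, x_N ∈ ∂Ω and radii r₁, …, r_N > 0 such that the balls B(x_i, r_i) cover ∂Ω and for each i, B(x_i, r_i) ∩ Ω = B(x_i, r_i) ∩ Ω_i, where Ω_i is a rotation (and translation) of a special Lipschitz domain. -/

import Mathlib

open Metric Set

/-- `S` is a rigid motion (rotation and translation) of a special Lipschitz domain
`{(x', x_d) : x_d > h(x')}` with `h : ℝ^{d-1} → ℝ` Lipschitz. -/
def IsRotatedSpecialLipschitzDomain {m : ℕ} (S : Set (EuclideanSpace ℝ (Fin (m + 1)))) :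
    Prop :=
  ∃ (f : EuclideanSpace ℝ (Fin (m + 1)) ≃ₗᵢ[ℝ] EuclideanSpace ℝ (Fin (m + 1)))
    (v : EuclideanSpace ℝ (Fin (m + 1))) (L : NNReal)
    (h : EuclideanSpace ℝ (Fin m) → ℝ), LipschitzWith L h ∧
      S = (fun z => f z + v) ''
        {x : EuclideanSpace ℝ (Fin (m + 1)) |
          h (WithLp.toLp 2 (fun i : Fin m => x i.castSucc)) < x (Fin.last m)}

noncomputable section
namespace ConvexLipAux

variable {m : ℕ}

lemma le_add_eps {a b : ℝ} (h : ∀ ε : ℝ, 0 < ε → a ≤ b + ε) : a ≤ b := by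
  by_contra hlt
  push_neg at hlt
  have := h ((a - b)/2) (by linarith)
  linarith

/-- The last standard basis vector. -/
def elast (m : ℕ) : EuclideanSpace ℝ (Fin (m+1)) := EuclideanSpace.single (Fin.last m) 1

/-- Append a last coordinate. -/
def snocE (y : EuclideanSpace ℝ (Fin m)) (t : ℝ) : EuclideanSpace ℝ (Fin (m+1)) := WithLp.toLp 2 (Fin.snoc (α := fun _ => ℝ) y.ofLp t)

/-- Forget the last coordinate. -/
def initE (x : EuclideanSpace ℝ (Fin (m+1))) : EuclideanSpace ℝ (Fin m) := WithLp.toLp 2 (Fin.init x.ofLp)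

@[simp] lemma snocE_castSucc (y : EuclideanSpace ℝ (Fin m)) (t : ℝ) (i : Fin m) :
    snocE y t i.castSucc = y i := by simp [snocE]

@[simp] lemma snocE_last (y : EuclideanSpace ℝ (Fin m)) (t : ℝ) :
    snocE y t (Fin.last m) = t := by simp [snocE]

@[simp] lemma initE_apply (x : EuclideanSpace ℝ (Fin (m+1))) (i : Fin m) :
    initE x i = x i.castSucc := rfl

lemma norm_sq_eq (x : EuclideanSpace ℝ (Fin (m+1))) :
    ‖x‖^2 = ‖initE x‖^2 + (x (Fin.last m))^2 := by
  rw [EuclideanSpace.norm_eq, EuclideanSpace.norm_eq,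
    Real.sq_sqrt (by positivity), Real.sq_sqrt (by positivity), Fin.sum_univ_castSucc]
  simp [initE, Fin.init, sq_abs]

lemma norm_initE_le (x : EuclideanSpace ℝ (Fin (m+1))) : ‖initE x‖ ≤ ‖x‖ := by
  have h := norm_sq_eq x
  nlinarith [norm_nonneg x, norm_nonneg (initE x), sq_nonneg (x (Fin.last m))]

lemma abs_last_le (x : EuclideanSpace ℝ (Fin (m+1))) : |x (Fin.last m)| ≤ ‖x‖ := by
  have h := norm_sq_eq x
  nlinarith [norm_nonneg x, norm_nonneg (initE x), sq_abs (x (Fin.last m)),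
    abs_nonneg (x (Fin.last m))]

lemma snocE_add_snocE (y₁ y₂ : EuclideanSpace ℝ (Fin m)) (t₁ t₂ : ℝ) :
    snocE y₁ t₁ + snocE y₂ t₂ = snocE (y₁ + y₂) (t₁ + t₂) := by
  ext j
  refine Fin.lastCases ?_ (fun i => ?_) j <;> simp [PiLp.add_apply]

lemma snocE_add_smul_elast (y : EuclideanSpace ℝ (Fin m)) (t s : ℝ) :
    snocE y t + s • elast m = snocE y (t + s) := by
  ext j
  refine Fin.lastCases ?_ (fun i => ?_) j <;>
    simp [PiLp.add_apply, PiLp.smul_apply, elast, EuclideanSpace.single_apply,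
      (Fin.castSucc_lt_last _).ne]

lemma snocE_zero_zero : snocE (0 : EuclideanSpace ℝ (Fin m)) (0:ℝ) = 0 := by
  ext j
  refine Fin.lastCases ?_ (fun i => ?_) j <;> simp

lemma norm_snocE_zero (y : EuclideanSpace ℝ (Fin m)) : ‖snocE y 0‖ = ‖y‖ := by
  have h := norm_sq_eq (snocE y 0)
  have h2 : initE (snocE y 0) = y := by ext i; simp
  rw [h2, snocE_last] at h
  nlinarith [norm_nonneg (snocE y 0), norm_nonneg y]

lemma norm_elast : ‖(elast m)‖ = 1 := by simp [elast, EuclideanSpace.norm_single]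

lemma norm_snocE_le (y : EuclideanSpace ℝ (Fin m)) (t : ℝ) : ‖snocE y t‖ ≤ ‖y‖ + |t| := by
  have h : snocE y t = snocE y 0 + t • elast m := by rw [snocE_add_smul_elast]; norm_num
  rw [h]
  calc ‖snocE y 0 + t • elast m‖ ≤ ‖snocE y 0‖ + ‖t • elast m‖ := norm_add_le _ _
    _ ≤ ‖y‖ + |t| := by
        rw [norm_snocE_zero, norm_smul, Real.norm_eq_abs, norm_elast, mul_one]

lemma snocE_initE (x : EuclideanSpace ℝ (Fin (m+1))) : snocE (initE x) (x (Fin.last m)) = x :=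
  by ext i; refine Fin.lastCases ?_ (fun j => ?_) i <;> simp

lemma smul_snocE_combo {a b : ℝ} (hab : a + b = 1) (y : EuclideanSpace ℝ (Fin m)) (t₁ t₂ : ℝ) :
    a • snocE y t₁ + b • snocE y t₂ = snocE y (a*t₁ + b*t₂) := by
  ext j
  refine Fin.lastCases ?_ (fun i => ?_) j <;>
    simp [PiLp.add_apply, PiLp.smul_apply]
  linear_combination (y i) * hab

/-- The cone condition for convex sets containing a ball on the axis. -/
lemma cone_mem {Ω : Set (EuclideanSpace ℝ (Fin (m+1)))} (hΩo : IsOpen Ω) (hΩc : Convex ℝ Ω)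
    {d₀ ρ : ℝ} (hρ : 0 < ρ) (hd : ρ ≤ d₀) (hball : ball (d₀ • elast m) ρ ⊆ Ω)
    {z w : EuclideanSpace ℝ (Fin (m+1))} {s : ℝ} (hz : z ∈ closure Ω)
    (hs : 0 < s) (hsd : s ≤ d₀) (hzn : ‖z‖ < ρ/2) (hw : ‖w‖ ≤ ρ/(4*d₀) * s) :
    z + s • elast m + w ∈ Ω := by
  have hd0 : 0 < d₀ := lt_of_lt_of_le hρ hd
  set y : EuclideanSpace ℝ (Fin (m+1)) := z + d₀ • elast m + (d₀/s) • w with hy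
  have hyball : y ∈ ball (d₀ • elast m) ρ := by
    rw [mem_ball, dist_eq_norm]
    have h1 : y - d₀ • elast m = z + (d₀/s) • w := by rw [hy]; abel
    rw [h1]
    have h2 : ‖(d₀/s) • w‖ = (d₀/s) * ‖w‖ := by
      rw [norm_smul, Real.norm_of_nonneg (by positivity)]
    calc ‖z + (d₀/s) • w‖ ≤ ‖z‖ + ‖(d₀/s) • w‖ := norm_add_le _ _
      _ < ρ/2 + ρ/2 := by
          rw [h2]
          have h3 : (d₀/s) * ‖w‖ ≤ (d₀/s) * (ρ/(4*d₀) * s) :=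
            mul_le_mul_of_nonneg_left hw (by positivity)
          have h4 : (d₀/s) * (ρ/(4*d₀) * s) = ρ/4 := by field_simp
          have : (d₀/s) * ‖w‖ ≤ ρ/4 := h4 ▸ h3
          linarith
      _ = ρ := by ring
  have hyΩ : y ∈ interior Ω := hΩo.interior_eq.symm ▸ hball hyball
  have hcombo := hΩc.combo_interior_closure_mem_interior hyΩ hz
    (a := s/d₀) (b := 1 - s/d₀) (by positivity) (by
      have : s/d₀ ≤ 1 := (div_le_one hd0).2 hsd
      linarith) (by ring)
  rw [hΩo.interior_eq] at hcombo
  have heq : (s/d₀) • y + (1 - s/d₀) • z = z + s • elast m + w := by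
    rw [hy]
    match_scalars <;> field_simp <;> ring
  rwa [heq] at hcombo

/-- The vertical slice of `Ω` over a base point `y`. -/
def Sset (Ω : Set (EuclideanSpace ℝ (Fin (m+1)))) (y : EuclideanSpace ℝ (Fin m)) : Set ℝ :=
  {t | snocE y t ∈ Ω}

lemma mem_Sset {Ω : Set (EuclideanSpace ℝ (Fin (m+1)))} {y : EuclideanSpace ℝ (Fin m)} {t : ℝ} :
    t ∈ Sset Ω y ↔ snocE y t ∈ Ω := Iff.rfl

/-- The boundary graph function. -/
def gfun (Ω : Set (EuclideanSpace ℝ (Fin (m+1)))) (y : EuclideanSpace ℝ (Fin m)) : ℝ :=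
  sInf (Sset Ω y)

lemma Sset_isOpen {Ω : Set (EuclideanSpace ℝ (Fin (m+1)))} (hΩo : IsOpen Ω)
    (y : EuclideanSpace ℝ (Fin m)) : IsOpen (Sset Ω y) := by
  have h : Sset Ω y = (fun t : ℝ => snocE y 0 + t • elast m) ⁻¹' Ω := by
    ext t
    simp only [Sset, mem_setOf_eq, mem_preimage, snocE_add_smul_elast, zero_add]
  rw [h]
  exact hΩo.preimage (continuous_const.add (continuous_id.smul continuous_const))

lemma Sset_ordConnected {Ω : Set (EuclideanSpace ℝ (Fin (m+1)))} (hΩc : Convex ℝ Ω)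
    (y : EuclideanSpace ℝ (Fin m)) : OrdConnected (Sset Ω y) := by
  have hconv : Convex ℝ (Sset Ω y) := by
    intro t₁ h₁ t₂ h₂ a b ha hb hab
    have hmem := hΩc h₁ h₂ ha hb hab
    rw [smul_snocE_combo hab] at hmem
    exact hmem
  exact hconv.ordConnected

/-- The main local lemma: near `0 ∈ ∂Ω`, with an interior ball on the positive last-coordinate
axis, `Ω` agrees with the epigraph of a Lipschitz function. -/
lemma local_graph {Ω : Set (EuclideanSpace ℝ (Fin (m+1)))} (hΩo : IsOpen Ω) (hΩc : Convex ℝ Ω)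
    (h0 : (0 : EuclideanSpace ℝ (Fin (m+1))) ∈ frontier Ω)
    {d₀ ρ : ℝ} (hρ : 0 < ρ) (hd : ρ ≤ d₀) (hball : ball (d₀ • elast m) ρ ⊆ Ω) :
    ∃ r > 0, ∃ (L : NNReal) (h : EuclideanSpace ℝ (Fin m) → ℝ), LipschitzWith L h ∧
      ball (0 : EuclideanSpace ℝ (Fin (m+1))) r ∩ Ω =
      ball (0 : EuclideanSpace ℝ (Fin (m+1))) r ∩
        {x : EuclideanSpace ℝ (Fin (m+1)) |
          h (WithLp.toLp 2 (fun i : Fin m => x i.castSucc)) < x (Fin.last m)} := by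
  have hd0 : 0 < d₀ := lt_of_lt_of_le hρ hd
  set κ : ℝ := ρ/(4*d₀) with hκdef
  set s₀ : ℝ := ρ/4 with hs₀def
  set δ : ℝ := κ * s₀ / 2 with hδdef
  have hκ0 : 0 < κ := by rw [hκdef]; positivity
  have hκ4 : κ ≤ 1/4 := by
    rw [hκdef, div_le_iff₀ (by positivity)]
    linarith
  have hκinv0 : (0:ℝ) ≤ κ⁻¹ := by positivity
  have hs₀0 : 0 < s₀ := by rw [hs₀def]; positivity
  have hs₀d : s₀ ≤ d₀ := by rw [hs₀def]; linarith
  have hδ0 : 0 < δ := by rw [hδdef]; positivity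
  have hδs : δ ≤ s₀/8 := by rw [hδdef]; nlinarith
  have hinvδ : κ⁻¹ * δ = s₀/2 := by
    rw [hδdef]; field_simp
  have h0notΩ : (0 : EuclideanSpace ℝ (Fin (m+1))) ∉ Ω := by
    have h0' := h0
    rw [hΩo.frontier_eq] at h0'
    exact h0'.2
  have h0cl : (0 : EuclideanSpace ℝ (Fin (m+1))) ∈ closure Ω := frontier_subset_closure h0
  -- membership from the cone at 0
  have F1 : ∀ (y : EuclideanSpace ℝ (Fin m)) (s : ℝ), 0 < s → ‖y‖ ≤ κ * s → s ≤ s₀ →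
      s ∈ Sset Ω y := by
    intro y s hs hys hss
    have hmem := cone_mem hΩo hΩc hρ hd hball (z := 0) (w := snocE y 0) (s := s)
      h0cl hs (le_trans hss hs₀d) (by rw [norm_zero]; positivity)
      (by rw [norm_snocE_zero, ← hκdef]; exact hys)
    rw [zero_add, add_comm (s • elast m) (snocE y 0), snocE_add_smul_elast, zero_add] at hmem
    exact hmem
  have hs₀S : ∀ y : EuclideanSpace ℝ (Fin m), ‖y‖ ≤ δ → s₀ ∈ Sset Ω y := by
    intro y hy
    refine F1 y s₀ hs₀0 ?_ le_rfl
    calc ‖y‖ ≤ δ := hy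
      _ ≤ κ * s₀ := by rw [hδdef]; nlinarith
  -- lower bound on the slice
  have hlow : ∀ y : EuclideanSpace ℝ (Fin m), ‖y‖ ≤ δ → ∀ t ∈ Sset Ω y, -(κ⁻¹ * ‖y‖) ≤ t := by
    intro y hy t ht
    by_contra hcon
    push_neg at hcon
    have hky : κ⁻¹ * ‖y‖ ≤ s₀/2 := by
      calc κ⁻¹ * ‖y‖ ≤ κ⁻¹ * δ := mul_le_mul_of_nonneg_left hy hκinv0
        _ = s₀/2 := hinvδ
    have hky0 : 0 ≤ κ⁻¹ * ‖y‖ := mul_nonneg hκinv0 (norm_nonneg y)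
    set t' : ℝ := max t (-(κ⁻¹ * ‖y‖) - δ) with ht'def
    have h1 : t' < -(κ⁻¹*‖y‖) := max_lt hcon (by linarith)
    have h2 : -s₀ ≤ t' := le_trans (by linarith) (le_max_right _ _)
    have ht's : t' ≤ s₀ := by linarith
    have ht'S : t' ∈ Sset Ω y :=
      (Sset_ordConnected hΩc y).out ht (hs₀S y hy) ⟨le_max_left _ _, ht's⟩
    have habs : |t'| ≤ s₀ := abs_le.2 ⟨h2, ht's⟩
    have hznorm : ‖snocE y t'‖ < ρ/2 := by
      refine lt_of_le_of_lt (norm_snocE_le y t') ?_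
      rw [hs₀def] at habs hδs
      linarith
    have hs0' : 0 < -t' := by linarith
    have hwb : ‖snocE (-y) 0‖ ≤ ρ/(4*d₀) * (-t') := by
      rw [norm_snocE_zero, norm_neg, ← hκdef]
      have hle : κ⁻¹ * ‖y‖ ≤ -t' := by linarith
      have : κ * (κ⁻¹ * ‖y‖) ≤ κ * (-t') := mul_le_mul_of_nonneg_left hle hκ0.le
      rw [← mul_assoc, mul_inv_cancel₀ hκ0.ne', one_mul] at this
      exact this
    have hmem := cone_mem hΩo hΩc hρ hd hball (subset_closure ht'S) hs0'
      (by linarith) hznorm hwb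
    rw [snocE_add_smul_elast, snocE_add_snocE] at hmem
    have heq : y + -y = 0 := by abel
    have heq2 : t' + -t' + 0 = (0:ℝ) := by ring
    rw [heq, heq2, snocE_zero_zero] at hmem
    exact h0notΩ hmem
  have hbdd : ∀ y : EuclideanSpace ℝ (Fin m), ‖y‖ ≤ δ → BddBelow (Sset Ω y) := by
    intro y hy
    exact ⟨-(κ⁻¹ * ‖y‖), fun t ht => hlow y hy t ht⟩
  have hSne : ∀ y : EuclideanSpace ℝ (Fin m), ‖y‖ ≤ δ → (Sset Ω y).Nonempty := by
    intro y hy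
    exact ⟨s₀, hs₀S y hy⟩
  have hg_lb : ∀ y : EuclideanSpace ℝ (Fin m), ‖y‖ ≤ δ → -(κ⁻¹ * ‖y‖) ≤ gfun Ω y := by
    intro y hy
    exact le_csInf (hSne y hy) (hlow y hy)
  have hg_ub : ∀ y : EuclideanSpace ℝ (Fin m), ‖y‖ ≤ δ → gfun Ω y ≤ κ⁻¹ * ‖y‖ := by
    intro y hy
    refine le_add_eps fun ε hε => ?_
    have hky : κ⁻¹ * ‖y‖ ≤ s₀/2 := by
      calc κ⁻¹ * ‖y‖ ≤ κ⁻¹ * δ := mul_le_mul_of_nonneg_left hy hκinv0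
        _ = s₀/2 := hinvδ
    have hky0 : 0 ≤ κ⁻¹ * ‖y‖ := mul_nonneg hκinv0 (norm_nonneg y)
    set s : ℝ := min (κ⁻¹*‖y‖ + ε) s₀ with hsdef
    have hsS : s ∈ Sset Ω y := by
      refine F1 y s (lt_min (by linarith) hs₀0) ?_ (min_le_right _ _)
      have hy1 : ‖y‖ ≤ κ * (κ⁻¹*‖y‖ + ε) := by
        rw [mul_add, ← mul_assoc, mul_inv_cancel₀ hκ0.ne', one_mul]
        nlinarith
      have hy2 : ‖y‖ ≤ κ * s₀ := by
        calc ‖y‖ ≤ δ := hy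
          _ ≤ κ * s₀ := by rw [hδdef]; nlinarith
      rw [hsdef]
      rcases min_cases (κ⁻¹*‖y‖ + ε) s₀ with ⟨hmin, _⟩ | ⟨hmin, _⟩ <;> rw [hmin]
      · exact hy1
      · exact hy2
    calc gfun Ω y ≤ s := csInf_le (hbdd y hy) hsS
      _ ≤ κ⁻¹*‖y‖ + ε := min_le_left _ _
  have hg_notmem : ∀ y : EuclideanSpace ℝ (Fin m), ‖y‖ ≤ δ → gfun Ω y ∉ Sset Ω y := by
    intro y hy hgS
    obtain ⟨ε, hε, hball'⟩ := Metric.isOpen_iff.1 (Sset_isOpen hΩo y) _ hgS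
    have hmem : gfun Ω y - ε/2 ∈ Sset Ω y := by
      apply hball'
      rw [mem_ball, Real.dist_eq]
      rw [abs_of_nonpos (by linarith)]
      linarith
    have h2 : gfun Ω y ≤ gfun Ω y - ε/2 := csInf_le (hbdd y hy) hmem
    linarith
  have hmem_iff : ∀ y : EuclideanSpace ℝ (Fin m), ‖y‖ ≤ δ → ∀ t : ℝ, t ≤ s₀ →
      (t ∈ Sset Ω y ↔ gfun Ω y < t) := by
    intro y hy t hts
    constructor
    · intro ht
      exact lt_of_le_of_ne (csInf_le (hbdd y hy) ht) fun he => hg_notmem y hy (he ▸ ht)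
    · intro hgt
      obtain ⟨t₁, ht₁S, ht₁⟩ := exists_lt_of_csInf_lt (hSne y hy) hgt
      exact (Sset_ordConnected hΩc y).out ht₁S (hs₀S y hy) ⟨ht₁.le, hts⟩
  -- one-sided Lipschitz estimate
  have honeside : ∀ y₁ y₂ : EuclideanSpace ℝ (Fin m), ‖y₁‖ ≤ δ → ‖y₂‖ ≤ δ →
      gfun Ω y₂ ≤ gfun Ω y₁ + κ⁻¹ * ‖y₂ - y₁‖ := by
    intro y₁ y₂ h1 h2
    have hky1 : κ⁻¹ * ‖y₁‖ ≤ s₀/2 := by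
      calc κ⁻¹ * ‖y₁‖ ≤ κ⁻¹ * δ := mul_le_mul_of_nonneg_left h1 hκinv0
        _ = s₀/2 := hinvδ
    have hky10 : 0 ≤ κ⁻¹ * ‖y₁‖ := mul_nonneg hκinv0 (norm_nonneg y₁)
    have main : ∀ ε : ℝ, 0 < ε → ε ≤ s₀/2 → gfun Ω y₂ ≤ gfun Ω y₁ + κ⁻¹*‖y₂-y₁‖ + 2*ε := by
      intro ε hε hε8
      set t : ℝ := gfun Ω y₁ + ε with htdef
      have htu : t ≤ s₀ := by
        have := hg_ub y₁ h1
        rw [htdef]; linarith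
      have htS : t ∈ Sset Ω y₁ := (hmem_iff y₁ h1 t htu).2 (by rw [htdef]; linarith)
      have htl : -s₀ ≤ t := by
        have := hg_lb y₁ h1
        rw [htdef]; linarith
      have habs : |t| ≤ s₀ := abs_le.2 ⟨htl, htu⟩
      have hznorm : ‖snocE y₁ t‖ < ρ/2 := by
        refine lt_of_le_of_lt (norm_snocE_le y₁ t) ?_
        rw [hs₀def] at habs hδs
        linarith
      set s : ℝ := κ⁻¹ * ‖y₂ - y₁‖ + ε with hsdef
      have hs0 : 0 < s := by
        have : 0 ≤ κ⁻¹ * ‖y₂ - y₁‖ := mul_nonneg hκinv0 (norm_nonneg _)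
        rw [hsdef]; linarith
      have hn21 : ‖y₂ - y₁‖ ≤ 2*δ := by
        calc ‖y₂ - y₁‖ ≤ ‖y₂‖ + ‖y₁‖ := norm_sub_le _ _
          _ ≤ 2*δ := by linarith
      have hsd' : s ≤ d₀ := by
        have hh : κ⁻¹ * ‖y₂ - y₁‖ ≤ κ⁻¹ * (2*δ) := mul_le_mul_of_nonneg_left hn21 hκinv0
        have hh2 : κ⁻¹ * (2*δ) = s₀ := by
          rw [show κ⁻¹ * (2*δ) = 2 * (κ⁻¹ * δ) by ring, hinvδ]; ring
        rw [hsdef, hs₀def] at *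
        linarith
      have hwb : ‖snocE (y₂ - y₁) 0‖ ≤ ρ/(4*d₀) * s := by
        rw [norm_snocE_zero, ← hκdef, hsdef, mul_add, ← mul_assoc,
          mul_inv_cancel₀ hκ0.ne', one_mul]
        nlinarith
      have hmem := cone_mem hΩo hΩc hρ hd hball (subset_closure htS) hs0 hsd' hznorm hwb
      rw [snocE_add_smul_elast, snocE_add_snocE] at hmem
      have heq : y₁ + (y₂ - y₁) = y₂ := by abel
      rw [heq] at hmem
      have hfin := csInf_le (hbdd y₂ h2) (mem_Sset.2 hmem)
      rw [htdef, hsdef] at hfin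
      calc gfun Ω y₂ ≤ gfun Ω y₁ + ε + (κ⁻¹ * ‖y₂ - y₁‖ + ε) + 0 := hfin
        _ = gfun Ω y₁ + κ⁻¹*‖y₂-y₁‖ + 2*ε := by ring
    refine le_add_eps fun ε hε => ?_
    have := main (min (ε/2) (s₀/2)) (lt_min (by linarith) (by linarith)) (min_le_right _ _)
    have hm := min_le_left (ε/2) (s₀/2)
    linarith
  -- Lipschitz on the closed ball, then extend
  have hLipOn : LipschitzOnWith (Real.toNNReal κ⁻¹) (gfun Ω)
      (closedBall (0 : EuclideanSpace ℝ (Fin m)) δ) := by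
    rw [lipschitzOnWith_iff_dist_le_mul]
    intro x hx y hy
    rw [mem_closedBall, dist_zero_right] at hx hy
    rw [Real.dist_eq, Real.coe_toNNReal _ hκinv0, dist_eq_norm]
    rw [abs_sub_le_iff]
    constructor
    · have := honeside y x hy hx
      linarith
    · have := honeside x y hx hy
      rw [norm_sub_rev] at this
      linarith
  obtain ⟨h, hLip, hEqOn⟩ := hLipOn.extend_real
  refine ⟨δ, hδ0, Real.toNNReal κ⁻¹, h, hLip, ?_⟩
  ext x
  simp only [mem_inter_iff, mem_ball_zero_iff, mem_setOf_eq]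
  refine and_congr_right fun hx => ?_
  have hyn : ‖initE x‖ ≤ δ := le_trans (norm_initE_le x) hx.le
  have htn : x (Fin.last m) ≤ s₀ := by
    have := le_trans (le_abs_self _) (abs_last_le x)
    rw [hs₀def] at hδs ⊢
    linarith
  have hgh : gfun Ω (initE x) = h (initE x) := hEqOn (mem_closedBall_zero_iff.2 hyn)
  have hSx : x ∈ Ω ↔ x (Fin.last m) ∈ Sset Ω (initE x) := by
    rw [mem_Sset, snocE_initE]
  have hfuneq : (WithLp.toLp 2 (fun i : Fin m => x i.castSucc)) = initE x := rfl
  rw [hSx, hmem_iff (initE x) hyn (x (Fin.last m)) htn, hfuneq, hgh]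

end ConvexLipAux
end

open ConvexLipAux in
/-- Every bounded convex open set is a bounded Lipschitz domain: its boundary is covered by
finitely many balls, on each of which `Ω` coincides with a rotated special Lipschitz
domain. -/
theorem convex_isLipschitzDomain {m : ℕ} (hm : 0 < m)
    (Ω : Set (EuclideanSpace ℝ (Fin (m + 1)))) (hΩb : Bornology.IsBounded Ω)
    (hΩc : Convex ℝ Ω) (hΩo : IsOpen Ω) (hne : Ω.Nonempty) :
    ∃ (N : ℕ) (x : Fin N → EuclideanSpace ℝ (Fin (m + 1))) (r : Fin N → ℝ),
      (∀ i, x i ∈ frontier Ω) ∧ (∀ i, 0 < r i) ∧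
      frontier Ω ⊆ ⋃ i, ball (x i) (r i) ∧
      ∀ i, ∃ Ωi : Set (EuclideanSpace ℝ (Fin (m + 1))),
        IsRotatedSpecialLipschitzDomain Ωi ∧
        ball (x i) (r i) ∩ Ω = ball (x i) (r i) ∩ Ωi := by
  classical
  -- the local statement at every boundary point
  have key : ∀ p ∈ frontier Ω, ∃ r > 0, ∃ Ωi : Set (EuclideanSpace ℝ (Fin (m + 1))),
      IsRotatedSpecialLipschitzDomain Ωi ∧ ball p r ∩ Ω = ball p r ∩ Ωi := by
    intro p hp
    obtain ⟨c, hc⟩ := hne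
    obtain ⟨ρ, hρ, hball⟩ := Metric.isOpen_iff.1 hΩo c hc
    have hpΩ : p ∉ Ω := by
      have hp' := hp
      rw [hΩo.frontier_eq] at hp'
      exact hp'.2
    set d₀ : ℝ := ‖p - c‖ with hd₀def
    have hd₀ : ρ ≤ d₀ := by
      by_contra hcon
      push_neg at hcon
      exact hpΩ (hball (by rw [mem_ball, dist_eq_norm]; exact hcon))
    have hd₀0 : 0 < d₀ := lt_of_lt_of_le hρ hd₀
    set e : EuclideanSpace ℝ (Fin (m + 1)) := d₀⁻¹ • (c - p) with hedef
    have hce : ‖c - p‖ = d₀ := by rw [hd₀def, norm_sub_rev]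
    have he1 : ‖e‖ = 1 := by
      rw [hedef, norm_smul, Real.norm_eq_abs, abs_of_pos (by positivity), hce]
      field_simp
    set f : EuclideanSpace ℝ (Fin (m + 1)) ≃ₗᵢ[ℝ] EuclideanSpace ℝ (Fin (m + 1)) :=
      Submodule.reflection (ℝ ∙ (elast m - e))ᗮ with hfdef
    have hfe : f (elast m) = e := Submodule.reflection_sub (by rw [norm_elast, he1])
    have hfde : f (d₀ • elast m) = c - p := by
      rw [map_smul, hfe, hedef, smul_smul, mul_inv_cancel₀ hd₀0.ne', one_smul]
    set ψ : EuclideanSpace ℝ (Fin (m + 1)) ≃ₜ EuclideanSpace ℝ (Fin (m + 1)) :=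
      f.toHomeomorph.trans (Homeomorph.addRight p) with hψdef
    have hψap : ∀ z, ψ z = f z + p := fun z => rfl
    set Ω' : Set (EuclideanSpace ℝ (Fin (m + 1))) := ψ ⁻¹' Ω with hΩ'def
    have hΩ'o : IsOpen Ω' := hΩo.preimage ψ.continuous
    have hΩ'c : Convex ℝ Ω' := by
      intro x hx y hy a b ha hb hab
      have hx' : f x + p ∈ Ω := hx
      have hy' : f y + p ∈ Ω := hy
      have := hΩc hx' hy' ha hb hab
      show f (a • x + b • y) + p ∈ Ω
      have heq : f (a • x + b • y) + p = a • (f x + p) + b • (f y + p) := by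
        have hcomb : a • (f x + p) + b • (f y + p) = (a • f x + b • f y) + (a + b) • p := by
          module
        rw [map_add, map_smul, map_smul, hcomb, hab, one_smul]
      rw [heq]
      exact this
    have h0f : (0 : EuclideanSpace ℝ (Fin (m + 1))) ∈ frontier Ω' := by
      rw [hΩ'def, ← ψ.preimage_frontier]
      show ψ 0 ∈ frontier Ω
      rw [hψap, map_zero, zero_add]
      exact hp
    have hball' : ball ((d₀ : ℝ) • elast m) ρ ⊆ Ω' := by
      intro z hz
      show ψ z ∈ Ω
      apply hball
      rw [mem_ball, dist_eq_norm, hψap]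
      have : f z + p - c = f z - f (d₀ • elast m) := by rw [hfde]; abel
      rw [this, ← map_sub, f.norm_map]
      rw [mem_ball, dist_eq_norm] at hz
      exact hz
    obtain ⟨r, hr, L, h, hLip, heq⟩ := local_graph hΩ'o hΩ'c h0f hρ hd₀ hball'
    set H : Set (EuclideanSpace ℝ (Fin (m + 1))) :=
      {x : EuclideanSpace ℝ (Fin (m + 1)) |
        h (WithLp.toLp 2 (fun i : Fin m => x i.castSucc)) < x (Fin.last m)} with hHdef
    refine ⟨r, hr, (fun z => f z + p) '' H, ⟨f, p, L, h, hLip, rfl⟩, ?_⟩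
    have himg : (fun z => f z + p) '' H = ψ '' H := rfl
    rw [himg]
    apply Function.Surjective.preimage_injective ψ.surjective
    have hpre1 : ψ ⁻¹' ball p r = ball (0 : EuclideanSpace ℝ (Fin (m + 1))) r := by
      ext z
      rw [mem_preimage, mem_ball, mem_ball_zero_iff, dist_eq_norm, hψap,
        add_sub_cancel_right, f.norm_map]
    rw [preimage_inter, preimage_inter, hpre1, ψ.preimage_image H]
    exact heq
  -- compactness of the boundary
  have hfc : IsCompact (frontier Ω) :=
    Metric.isCompact_of_isClosed_isBounded isClosed_frontier
      (hΩb.closure.subset frontier_subset_closure)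
  choose! r hr0 Ωi hΩi1 hΩi2 using key
  obtain ⟨t, htsub, hcov⟩ := hfc.elim_nhds_subcover (fun p => ball p (r p))
    (fun p hp => ball_mem_nhds p (hr0 p hp))
  refine ⟨t.card, fun i => (t.equivFin.symm i : EuclideanSpace ℝ (Fin (m + 1))),
    fun i => r (t.equivFin.symm i), ?_, ?_, ?_, ?_⟩
  · intro i
    exact htsub _ (t.equivFin.symm i).2
  · intro i
    exact hr0 _ (htsub _ (t.equivFin.symm i).2)
  · intro q hq
    have := hcov hq
    rw [mem_iUnion₂] at this
    obtain ⟨p, hpt, hq'⟩ := this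
    rw [mem_iUnion]
    refine ⟨t.equivFin ⟨p, hpt⟩, ?_⟩
    simpa using hq'
  · intro i
    exact ⟨Ωi (t.equivFin.symm i), hΩi1 _ (htsub _ (t.equivFin.symm i).2),
      hΩi2 _ (htsub _ (t.equivFin.symm i).2)⟩
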